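/- arXiv:0912.1164 — 2 statements merged into one kernel-verified Lean document; each statement's English description precedes it below -/
import Mathlib

section
/- A free profinite group of finite rank m is almost ω-free if and only if m > 1. -/
open AlgebraicGeometry CategoryTheory CategoryTheory.Limits

universe u v

noncomputable section


/-- A profinite group `Π` is almost ω-free if every finite embedding problem
`(α : Π ↠ G, f : Γ ↠ G)` for `Π` has a proper solution after restriction to some open
subgroup `H ≤ Π` on which `α` remains surjective.  (Finite groups carry the discrete
topology.) -/
def IsAlmostOmegaFree (P : Type v) [Group P] [TopologicalSpace P] : Prop :=
  ∀ (G Γ : Type) [Group G] [Group Γ] [Finite G] [Finite Γ] (α : P →* G) (f : Γ →* G),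
    (@Continuous P G _ ⊥ α) → Function.Surjective α → Function.Surjective f →
    ∃ H : Subgroup P, IsOpen (H : Set P) ∧
      Function.Surjective (α.comp H.subtype) ∧
      ∃ γ : H →* Γ, (@Continuous H Γ _ ⊥ γ) ∧ Function.Surjective γ ∧
        f.comp γ = α.comp H.subtype

/-- A profinite group `Π` is ω-free if every finite embedding problem for `Π` has a
proper solution. -/
def IsOmegaFree (P : Type v) [Group P] [TopologicalSpace P] : Prop :=
  ∀ (G Γ : Type) [Group G] [Group Γ] [Finite G] [Finite Γ] (α : P →* G) (f : Γ →* G),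
    (@Continuous P G _ ⊥ α) → Function.Surjective α → Function.Surjective f →
    ∃ γ : P →* Γ, (@Continuous P Γ _ ⊥ γ) ∧ Function.Surjective γ ∧ f.comp γ = α

/-- `Π` is a free profinite group of rank `m`, i.e. the profinite completion of the free
group on `m` generators: it is a profinite group containing `m` distinguished elements
such that every map from these to a finite group extends uniquely to a continuous
homomorphism. -/
def IsFreeProfiniteOfRank (m : ℕ) (P : Type v) [Group P] [TopologicalSpace P] : Prop :=
  IsTopologicalGroup P ∧ CompactSpace P ∧ T2Space P ∧ TotallyDisconnectedSpace P ∧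
  ∃ ι : Fin m → P, ∀ (G : Type) [Group G] [Finite G] (g : Fin m → G),
    ∃! φ : {f : P →* G // @Continuous P G _ ⊥ f}, ∀ i, (φ : P →* G) (ι i) = g i

set_option linter.unusedSectionVars false

namespace HS

/-- Continuity into a discrete (⊥) topology from open fibers. -/
lemma continuous_bot_of_fibers {X Y : Type*} [TopologicalSpace X] (g : X → Y)
    (h : ∀ y, IsOpen (g ⁻¹' {y})) : @Continuous X Y _ ⊥ g := by
  letI : TopologicalSpace Y := ⊥
  haveI : DiscreteTopology Y := ⟨rfl⟩
  rw [continuous_def]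
  intro s _
  have : g ⁻¹' s = ⋃ y ∈ s, g ⁻¹' {y} := by
    ext x; simp
  rw [this]
  exact isOpen_biUnion fun y _ => h y

lemma isOpen_preimage_of_continuous_bot {X Y : Type*} [TopologicalSpace X] (g : X → Y)
    (h : @Continuous X Y _ ⊥ g) (s : Set Y) : IsOpen (g ⁻¹' s) := by
  letI : TopologicalSpace Y := ⊥
  haveI : DiscreteTopology Y := ⟨rfl⟩
  exact h.isOpen_preimage s (isOpen_discrete s)

/-- every map out of a ⊥-topology space is continuous -/
lemma continuous_of_bot_dom {X Y : Type*} [ty : TopologicalSpace Y] (g : X → Y) :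
    @Continuous X Y ⊥ ty g := by
  letI : TopologicalSpace X := ⊥
  haveI : DiscreteTopology X := ⟨rfl⟩
  exact continuous_of_discreteTopology

variable {P : Type v} [Group P] [TopologicalSpace P] [IsTopologicalGroup P]
  [CompactSpace P] [T2Space P] [TotallyDisconnectedSpace P]

/-- open normal subgroups inside any open neighborhood of 1 -/
lemma exists_openNormal_sub {U : Set P} (hU : IsOpen U) (h1 : (1 : P) ∈ U) :
    ∃ N : Subgroup P, N.Normal ∧ IsOpen (N : Set P) ∧ (N : Set P) ⊆ U := by
  obtain ⟨W, ⟨hxW, hW⟩, hWU⟩ := (nhds_basis_clopen (1 : P)).mem_iff.mp (hU.mem_nhds h1)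
  obtain ⟨N, hN⟩ := IsTopologicalGroup.exist_openNormalSubgroup_sub_clopen_nhds_of_one hW hxW
  exact ⟨N.toSubgroup, N.isNormal', N.isOpen', fun x hx => hWU (hN hx)⟩

/-- Key separation: two continuous homs into a finite group in `Type 0` that agree on a
closed subgroup `K` but differ at a point `x ∉ K`. -/
lemma exists_sep_homs {K : Subgroup P} (hK : IsClosed (K : Set P)) {x : P} (hx : x ∉ K) :
    ∃ (M : Type) (_ : Group M) (_ : Finite M) (ψ₁ ψ₂ : P →* M),
      (@Continuous P M _ ⊥ ψ₁) ∧ (@Continuous P M _ ⊥ ψ₂) ∧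
      (∀ k ∈ K, ψ₁ k = ψ₂ k) ∧ ψ₁ x ≠ ψ₂ x := by
  -- find open normal N with N ∩ K•x = ∅
  have hKx : IsClosed ((fun k => k * x) '' (K : Set P)) := by
    have : (fun k => k * x) '' (K : Set P) = (fun y => y * x⁻¹) ⁻¹' (K : Set P) := by
      ext y
      constructor
      · rintro ⟨k, hk, rfl⟩; simpa using hk
      · intro hy; exact ⟨y * x⁻¹, hy, by group⟩
    rw [this]
    exact hK.preimage (by continuity)
  have h1 : (1 : P) ∉ (fun k => k * x) '' (K : Set P) := by
    rintro ⟨k, hk, hkx⟩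
    have : k = x⁻¹ := by
      rw [eq_inv_iff_mul_eq_one]; exact hkx
    rw [this] at hk
    exact hx (by simpa using K.inv_mem hk)
  obtain ⟨N, hNnormal, hNopen, hNsub⟩ :=
    exists_openNormal_sub (U := ((fun k => k * x) '' (K : Set P))ᶜ) hKx.isOpen_compl h1
  haveI := hNnormal
  -- x ∉ K * N
  have hxKN : ∀ k ∈ K, k⁻¹ * x ∉ N := by
    intro k hk hkn
    exact hNsub hkn ⟨k⁻¹, K.inv_mem hk, rfl⟩
  haveI : Finite (P ⧸ N) := N.quotient_finite_of_isOpen hNopen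
  set q : P →* P ⧸ N := QuotientGroup.mk' N with hq
  have hqopen : ∀ s : Set (P ⧸ N), IsOpen (q ⁻¹' s) := by
    intro s
    have hcov : q ⁻¹' s = ⋃ p ∈ q ⁻¹' s, (fun y => p * y) '' (N : Set P) := by
      ext z
      constructor
      · intro hz
        exact Set.mem_biUnion hz ⟨1, N.one_mem, by simp⟩
      · intro hz
        obtain ⟨p, hp, ⟨nn, hnn, rfl⟩⟩ := Set.mem_iUnion₂.mp hz
        have : q (p * nn) = q p := by
          simp only [map_mul, hq]
          have : q nn = 1 := (QuotientGroup.eq_one_iff nn).mpr hnn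
          rw [hq] at this
          rw [this, mul_one]
        simpa [this] using hp
    rw [hcov]
    exact isOpen_biUnion fun p _ =>
      (Homeomorph.mulLeft p).isOpenMap _ hNopen
  -- the image subgroup T
  set T : Subgroup (P ⧸ N) := K.map q with hT
  have hqmemT : ∀ k ∈ K, q k ∈ T := fun k hk => Subgroup.mem_map.mpr ⟨k, hk, rfl⟩
  have hqxT : q x ∉ T := by
    intro hmem
    obtain ⟨k, hk, hkq⟩ := Subgroup.mem_map.mp hmem
    have h2 : q (k⁻¹ * x) = 1 := by rw [map_mul, map_inv, hkq]; simp
    exact hxKN k hk ((QuotientGroup.eq_one_iff _).mp h2)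
  classical
  -- doubling permutation trick on (P ⧸ N) × Bool
  set X := (P ⧸ N) × Bool with hX
  haveI : Finite X := inferInstance
  -- left action
  set η : (P ⧸ N) →* Equiv.Perm X :=
    { toFun := fun g => Equiv.prodCongr (Equiv.mulLeft g) (Equiv.refl Bool)
      map_one' := by ext z <;> simp
      map_mul' := fun g h => Equiv.ext fun z =>
        show ((g * h) * z.1, z.2) = (g * (h * z.1), z.2) by rw [mul_assoc] } with hη
  have hηapply : ∀ g (z : X), η g z = (g * z.1, z.2) := fun g z => rfl
  -- the swapping involution
  have θinv : Function.Involutive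
      (fun z : X => if z.1 ∈ T then (z.1, !z.2) else z) := by
    intro z
    by_cases hz : z.1 ∈ T <;> simp [hz]
  set θ : Equiv.Perm X := θinv.toPerm _ with hθ
  have hθapply : ∀ z : X, θ z = if z.1 ∈ T then (z.1, !z.2) else z := fun z => rfl
  set η₂ : (P ⧸ N) →* Equiv.Perm X :=
    ((MulAut.conj θ).toMonoidHom).comp η with hη₂
  have hη₂apply : ∀ g, η₂ g = θ * η g * θ⁻¹ := fun g => rfl
  -- they agree on T
  have hθθ : θ⁻¹ = θ := θinv.toPerm_symm
  have hagree : ∀ t ∈ T, η₂ t = η t := by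
    intro t ht
    rw [hη₂apply, hθθ]
    apply Equiv.ext
    intro z
    simp only [Equiv.Perm.mul_apply]
    by_cases hz : z.1 ∈ T
    · have htz : t * z.1 ∈ T := T.mul_mem ht hz
      rw [hθapply z, if_pos hz, hηapply, hθapply, if_pos htz, hηapply]
      simp
    · have htz : t * z.1 ∉ T := fun h => hz (by
        have h2 : z.1 = t⁻¹ * (t * z.1) := by group
        rw [h2]; exact T.mul_mem (T.inv_mem ht) h)
      rw [hθapply z, if_neg hz, hθapply, hηapply, if_neg htz]
  -- they differ at q x
  have hdiff : η₂ (q x) ≠ η (q x) := by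
    intro heq
    have h1' : (η (q x)) ((1 : P ⧸ N), false) = (q x, false) := by
      rw [hηapply]; simp
    have h2' : (η₂ (q x)) ((1 : P ⧸ N), false) = (q x, true) := by
      rw [hη₂apply, hθθ]
      simp only [Equiv.Perm.mul_apply]
      simp only [hθapply, hηapply]
      simp [T.one_mem, hqxT]
    rw [heq, h1'] at h2'
    have : false = true := congrArg Prod.snd h2'
    exact Bool.false_ne_true this
  -- transport to a Type 0 group via an equivalence with Fin
  haveI : Fintype X := Fintype.ofFinite X
  set e : X ≃ Fin (Fintype.card X) := Fintype.equivFin X with he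
  set M : Type := Equiv.Perm (Fin (Fintype.card X)) with hM
  set Θ : Equiv.Perm X ≃* M :=
    { toEquiv := e.permCongr
      map_mul' := fun a b => by
        apply Equiv.ext; intro i
        show e (a (b (e.symm i))) = e (a (e.symm (e (b (e.symm i)))))
        rw [Equiv.symm_apply_apply] } with hΘ
  refine ⟨M, inferInstance, inferInstance,
    (Θ.toMonoidHom.comp η).comp q, (Θ.toMonoidHom.comp η₂).comp q, ?_, ?_, ?_, ?_⟩
  · exact continuous_bot_of_fibers _ fun y => hqopen ((fun g => Θ (η g)) ⁻¹' {y})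
  · exact continuous_bot_of_fibers _ fun y => hqopen ((fun g => Θ (η₂ g)) ⁻¹' {y})
  · intro k hk
    simp only [MonoidHom.comp_apply]
    rw [hagree (q k) (hqmemT k hk)]
  · intro heq
    simp only [MonoidHom.comp_apply] at heq
    exact hdiff (Θ.injective heq.symm)



section UP

variable {m : ℕ} {P : Type v} [Group P] [TopologicalSpace P] [IsTopologicalGroup P]
  [CompactSpace P] [T2Space P] [TotallyDisconnectedSpace P] (ι : Fin m → P)

/-- uniqueness part of the universal property -/
lemma homs_eq_of_up
    (hUP : ∀ (G : Type) [Group G] [Finite G] (g : Fin m → G),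
      ∃! φ : {f : P →* G // @Continuous P G _ ⊥ f}, ∀ i, (φ : P →* G) (ι i) = g i)
    {M : Type} [Group M] [Finite M] {ψ₁ ψ₂ : P →* M}
    (h₁ : @Continuous P M _ ⊥ ψ₁) (h₂ : @Continuous P M _ ⊥ ψ₂)
    (h : ∀ i, ψ₁ (ι i) = ψ₂ (ι i)) : ψ₁ = ψ₂ := by
  obtain ⟨φ, hφ, huniq⟩ := hUP M (fun i => ψ₁ (ι i))
  have e1 := huniq ⟨ψ₁, h₁⟩ (fun i => rfl)
  have e2 := huniq ⟨ψ₂, h₂⟩ (fun i => (h i).symm)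
  have := e1.trans e2.symm
  exact congrArg Subtype.val this

/-- density of the subgroup generated by the distinguished elements -/
lemma dense_of_up
    (hUP : ∀ (G : Type) [Group G] [Finite G] (g : Fin m → G),
      ∃! φ : {f : P →* G // @Continuous P G _ ⊥ f}, ∀ i, (φ : P →* G) (ι i) = g i) :
    Dense ((Subgroup.closure (Set.range ι) : Subgroup P) : Set P) := by
  set K : Subgroup P := (Subgroup.closure (Set.range ι)).topologicalClosure with hKdef
  have hKc : IsClosed (K : Set P) := (Subgroup.closure (Set.range ι)).isClosed_topologicalClosure
  have hKtop : K = ⊤ := by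
    by_contra hne
    obtain ⟨x, hx⟩ : ∃ x : P, x ∉ K := by
      by_contra hall
      push_neg at hall
      exact hne (Subgroup.eq_top_iff' K |>.mpr hall)
    obtain ⟨M, _, _, ψ₁, ψ₂, hc₁, hc₂, hagree, hdiff⟩ := exists_sep_homs hKc hx
    have hmem : ∀ i, ι i ∈ K :=
      fun i => (Subgroup.le_topologicalClosure _) (Subgroup.subset_closure ⟨i, rfl⟩)
    have : ψ₁ = ψ₂ := homs_eq_of_up ι hUP hc₁ hc₂ (fun i => hagree _ (hmem i))
    exact hdiff (by rw [this])
  rw [dense_iff_closure_eq, ← Subgroup.topologicalClosure_coe]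
  rw [show (Subgroup.closure (Set.range ι)).topologicalClosure = K from rfl, hKtop]
  exact Subgroup.coe_top

/-- rank 0: the group is trivial -/
lemma trivial_of_up_zero
    (hUP : ∀ (G : Type) [Group G] [Finite G] (g : Fin m → G),
      ∃! φ : {f : P →* G // @Continuous P G _ ⊥ f}, ∀ i, (φ : P →* G) (ι i) = g i)
    (hm : m = 0) : ∀ p : P, p = 1 := by
  intro p
  by_contra hp
  have hpbot : p ∉ (⊥ : Subgroup P) := by simpa [Subgroup.mem_bot] using hp
  have hbotc : IsClosed ((⊥ : Subgroup P) : Set P) := by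
    simpa [Subgroup.coe_bot] using (isClosed_singleton : IsClosed ({1} : Set P))
  obtain ⟨M, _, _, ψ₁, ψ₂, hc₁, hc₂, _, hdiff⟩ := exists_sep_homs hbotc hpbot
  have : ψ₁ = ψ₂ := homs_eq_of_up ι hUP hc₁ hc₂ (fun i => by
    subst hm; exact i.elim0)
  exact hdiff (by rw [this])

/-- no surjection from a trivial group kills almost-ω-freeness at rank 0 -/
lemma not_aof_of_rank_zero
    (hUP : ∀ (G : Type) [Group G] [Finite G] (g : Fin m → G),
      ∃! φ : {f : P →* G // @Continuous P G _ ⊥ f}, ∀ i, (φ : P →* G) (ι i) = g i)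
    (hm : m = 0) : ¬ IsAlmostOmegaFree P := by
  intro hAOF
  have htriv := trivial_of_up_zero ι hUP hm
  obtain ⟨H, hHopen, hHsurj, γ, hγcont, hγsurj, hγcomm⟩ :=
    hAOF PUnit (Multiplicative (ZMod 2)) 1 1
      (by exact continuous_const)
      (fun c => ⟨1, Subsingleton.elim _ _⟩)
      (fun c => ⟨1, Subsingleton.elim _ _⟩)
  obtain ⟨h2, hh2⟩ := hγsurj (Multiplicative.ofAdd (1 : ZMod 2))
  have : h2 = (1 : H) := by
    apply Subtype.ext
    simpa using htriv (h2 : P)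
  rw [this, map_one] at hh2
  exact (by decide : (1 : Multiplicative (ZMod 2)) ≠ Multiplicative.ofAdd 1) hh2

/-- rank 1: not almost ω-free -/
lemma not_aof_of_rank_one
    (hUP : ∀ (G : Type) [Group G] [Finite G] (g : Fin m → G),
      ∃! φ : {f : P →* G // @Continuous P G _ ⊥ f}, ∀ i, (φ : P →* G) (ι i) = g i)
    (hm : m = 1) : ¬ IsAlmostOmegaFree P := by
  subst hm
  intro hAOF
  have hdense : Dense ((Subgroup.closure (Set.range ι) : Subgroup P) : Set P) :=
    dense_of_up ι hUP
  have hrange : Set.range ι = {ι 0} := by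
    ext p
    constructor
    · rintro ⟨i, rfl⟩
      rw [Subsingleton.elim i 0]
      exact Set.mem_singleton _
    · intro hp
      exact ⟨0, (Set.mem_singleton_iff.mp hp).symm⟩
  have hzp : Subgroup.closure (Set.range ι) = Subgroup.zpowers (ι 0) := by
    rw [hrange, ← Subgroup.zpowers_eq_closure]
  -- density in open-coset form
  have key : ∀ (V : Subgroup P), IsOpen (V : Set P) → ∀ p : P,
      ∃ k : ℤ, p⁻¹ * (ι 0) ^ k ∈ V := by
    intro V hV p
    have hopen : IsOpen ((fun y => p * y) '' (V : Set P)) :=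
      (Homeomorph.mulLeft p).isOpenMap _ hV
    have hne : ((fun y => p * y) '' (V : Set P)).Nonempty := ⟨p, 1, V.one_mem, mul_one p⟩
    obtain ⟨t, htU, htS⟩ := hdense.inter_open_nonempty _ hopen hne
    have htz : t ∈ Subgroup.zpowers (ι 0) := by rw [← hzp]; exact htS
    obtain ⟨k, hk⟩ := Subgroup.mem_zpowers_iff.mp htz
    obtain ⟨vv, hvv, hvvt⟩ := htU
    refine ⟨k, ?_⟩
    rw [hk, ← hvvt]
    simpa using hvv
  -- P is abelian
  have habel : ∀ a b : P, a * b = b * a := by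
    intro a b
    by_contra hne
    set z := a * b * (b * a)⁻¹ with hz
    have hz1 : z ≠ 1 := fun hzeq => hne (mul_inv_eq_one.mp hzeq)
    obtain ⟨N, hNn, hNo, hNsub⟩ := exists_openNormal_sub
      (U := ({z} : Set P)ᶜ) isClosed_singleton.isOpen_compl
      (by simpa using (Ne.symm hz1))
    haveI := hNn
    set q := QuotientGroup.mk' N with hqdef
    have hqz : q z ≠ 1 := by
      intro hq1
      exact hNsub ((QuotientGroup.eq_one_iff _).mp hq1) rfl
    have hcyc : ∀ p : P, ∃ k : ℤ, q p = (q (ι 0)) ^ k := by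
      intro p
      obtain ⟨k, hk⟩ := key N hNo p
      refine ⟨k, ?_⟩
      have h1 : q (p⁻¹ * (ι 0) ^ k) = 1 := (QuotientGroup.eq_one_iff _).mpr hk
      rw [map_mul, map_inv, map_zpow] at h1
      exact (inv_mul_eq_one.mp h1).symm ▸ rfl
    obtain ⟨i, hi⟩ := hcyc a
    obtain ⟨j, hj⟩ := hcyc b
    apply hqz
    rw [hz, map_mul, map_mul, map_inv, map_mul, hi, hj]
    group
  -- build α
  obtain ⟨φα, hφα0, -⟩ := hUP (Multiplicative (ZMod 2))
    (fun _ => Multiplicative.ofAdd (1 : ZMod 2))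
  set α : P →* Multiplicative (ZMod 2) := φα.1 with hαdef
  have hαc : @Continuous P (Multiplicative (ZMod 2)) _ ⊥ α := φα.2
  have hα0 : α (ι 0) = Multiplicative.ofAdd 1 := hφα0 0
  have hαsurj : Function.Surjective α := by
    have hcases : ∀ c : Multiplicative (ZMod 2),
        c = 1 ∨ c = Multiplicative.ofAdd 1 := by decide
    intro c
    rcases hcases c with rfl | rfl
    · exact ⟨1, map_one α⟩
    · exact ⟨ι 0, hα0⟩
  -- the embedding problem
  set f : Multiplicative (ZMod 2 × ZMod 2) →* Multiplicative (ZMod 2) :=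
    AddMonoidHom.toMultiplicative (AddMonoidHom.fst (ZMod 2) (ZMod 2)) with hfdef
  have hfsurj : Function.Surjective f := fun c => ⟨Multiplicative.ofAdd (c.toAdd, 0), rfl⟩
  obtain ⟨H, hHopen, hHs, γ, hγc, hγs, hγcomm⟩ :=
    hAOF (Multiplicative (ZMod 2)) (Multiplicative (ZMod 2 × ZMod 2)) α f hαc hαsurj hfsurj
  -- the kernel of γ as an open subgroup of P
  set V : Subgroup P := (MonoidHom.ker γ).map H.subtype with hVdef
  have hVopen : IsOpen (V : Set P) := by
    have hset : (V : Set P) = (Subtype.val) '' (⇑γ ⁻¹' {1}) := by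
      rw [hVdef, Subgroup.coe_map]
      rfl
    rw [hset]
    exact hHopen.isOpenMap_subtype_val _ (isOpen_preimage_of_continuous_bot γ hγc {1})
  haveI hVnormal : V.Normal := by
    constructor
    intro p hp g
    have hconj : g * p * g⁻¹ = p := by rw [habel g p, mul_inv_cancel_right]
    rwa [hconj]
  set q := QuotientGroup.mk' V with hqdef
  haveI hcycQ : IsCyclic (P ⧸ V) := by
    refine ⟨⟨q (ι 0), fun x => ?_⟩⟩
    obtain ⟨p, rfl⟩ := QuotientGroup.mk'_surjective V x
    obtain ⟨k, hk⟩ := key V hVopen p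
    have h1 : q (p⁻¹ * (ι 0) ^ k) = 1 := (QuotientGroup.eq_one_iff _).mpr hk
    rw [map_mul, map_inv, map_zpow] at h1
    exact Subgroup.mem_zpowers_iff.mpr ⟨k, (inv_mul_eq_one.mp h1).symm⟩
  set j : ↥H →* P ⧸ V := q.comp H.subtype with hjdef
  have hkerj : MonoidHom.ker j = MonoidHom.ker γ := by
    ext h
    simp only [MonoidHom.mem_ker, MonoidHom.comp_apply, hjdef]
    constructor
    · intro hh
      have hmem : (H.subtype h) ∈ V := (QuotientGroup.eq_one_iff _).mp hh
      obtain ⟨h', hh', hval⟩ := Subgroup.mem_map.mp hmem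
      have heq : h' = h := Subtype.ext hval
      rw [heq] at hh'
      exact hh'
    · intro hh
      exact (QuotientGroup.eq_one_iff _).mpr (Subgroup.mem_map.mpr ⟨h, hh, rfl⟩)
  haveI : IsCyclic (MonoidHom.range j) := Subgroup.isCyclic _
  have e1 := QuotientGroup.quotientKerEquivRange j
  haveI hc1 : IsCyclic (↥H ⧸ MonoidHom.ker j) :=
    isCyclic_of_surjective e1.symm e1.symm.surjective
  have e12 := QuotientGroup.quotientMulEquivOfEq hkerj
  haveI hc2 : IsCyclic (↥H ⧸ MonoidHom.ker γ) := isCyclic_of_surjective e12 e12.surjective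
  have e2 := QuotientGroup.quotientKerEquivOfSurjective γ hγs
  have hcycΓ : IsCyclic (Multiplicative (ZMod 2 × ZMod 2)) :=
    isCyclic_of_surjective e2 e2.surjective
  obtain ⟨g, hg⟩ := hcycΓ.exists_generator
  have hxx : ∀ x : Multiplicative (ZMod 2 × ZMod 2), x * x = 1 := by decide
  have hg2 : g ^ (2 : ℤ) = 1 := by rw [zpow_two]; exact hxx g
  have hpow : ∀ i : ℤ, g ^ i = 1 ∨ g ^ i = g := by
    intro i
    rcases Int.even_or_odd i with ⟨k, hk⟩ | ⟨k, hk⟩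
    · left; rw [show i = 2 * k by omega, zpow_mul, hg2, one_zpow]
    · right; rw [show i = 2 * k + 1 by omega, zpow_add, zpow_mul, hg2, one_zpow, one_mul,
        zpow_one]
  obtain ⟨iA, hiA⟩ := Subgroup.mem_zpowers_iff.mp
    (hg (Multiplicative.ofAdd ((1, 0) : ZMod 2 × ZMod 2)))
  obtain ⟨iB, hiB⟩ := Subgroup.mem_zpowers_iff.mp
    (hg (Multiplicative.ofAdd ((0, 1) : ZMod 2 × ZMod 2)))
  have hAval : Multiplicative.ofAdd ((1, 0) : ZMod 2 × ZMod 2) = g := by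
    rcases hpow iA with h | h
    · rw [hiA] at h; exact absurd h.symm (by decide)
    · rw [← hiA, h]
  have hBval : Multiplicative.ofAdd ((0, 1) : ZMod 2 × ZMod 2) = g := by
    rcases hpow iB with h | h
    · rw [hiB] at h; exact absurd h.symm (by decide)
    · rw [← hiB, h]
  have : Multiplicative.ofAdd ((1, 0) : ZMod 2 × ZMod 2)
      = Multiplicative.ofAdd ((0, 1) : ZMod 2 × ZMod 2) := by rw [hAval, hBval]
  exact absurd this (by decide)

end UP

section Wreath

variable (n : ℕ) [NeZero n] (Γ : Type*) [Group Γ]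

/-- the shift action of `ZMod n` on `ZMod n → Γ` -/
def shift : Multiplicative (ZMod n) →* MulAut (ZMod n → Γ) where
  toFun c :=
    { toFun := fun u d => u (d - c.toAdd)
      invFun := fun u d => u (d + c.toAdd)
      left_inv := fun u => funext fun d => by simp
      right_inv := fun u => funext fun d => by simp
      map_mul' := fun u v => rfl }
  map_one' := by
    apply MulEquiv.ext
    intro u
    funext d
    simp
  map_mul' := fun c c' => by
    apply MulEquiv.ext
    intro u
    funext d
    show u (d - (c * c').toAdd) = u (d - c.toAdd - c'.toAdd)
    rw [toAdd_mul, ← sub_sub]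

@[simp] lemma shift_apply (c : Multiplicative (ZMod n)) (u : ZMod n → Γ) (d : ZMod n) :
    (shift n Γ c) u d = u (d - c.toAdd) := rfl

instance finite_sdp {N G : Type*} [Group N] [Group G] {φ : G →* MulAut N}
    [Finite N] [Finite G] : Finite (N ⋊[φ] G) :=
  Finite.of_injective (fun x => (x.left, x.right))
    (fun a b h => SemidirectProduct.ext (congrArg Prod.fst h) (congrArg Prod.snd h))

variable {P : Type v} [Group P] {G : Type*} [Group G]

/-- the Kaloujnine–Krasner style homomorphism attached to `α`, `ψ` and a set-theoretic
section `s`. -/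
def KK (α : P →* G) (ψ : P →* Multiplicative (ZMod n)) (s : ZMod n → P) :
    P →* (ZMod n → G) ⋊[shift n G] Multiplicative (ZMod n) where
  toFun p := ⟨fun d => α ((s d)⁻¹ * p * s (d - (ψ p).toAdd)), ψ p⟩
  map_one' := by
    refine SemidirectProduct.ext ?_ ?_
    · funext d
      simp
    · simp
  map_mul' := fun p p' => by
    refine SemidirectProduct.ext ?_ ?_
    · funext d
      show α ((s d)⁻¹ * (p * p') * s (d - (ψ (p * p')).toAdd))
          = α ((s d)⁻¹ * p * s (d - (ψ p).toAdd)) *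
            ((shift n G (ψ p)) (fun e => α ((s e)⁻¹ * p' * s (e - (ψ p').toAdd)))) d
      rw [shift_apply, ← map_mul]
      congr 1
      rw [map_mul ψ]
      show (s d)⁻¹ * (p * p') * s (d - ((ψ p).toAdd + (ψ p').toAdd)) = _
      rw [← sub_sub]
      group
    · show (ψ (p * p')) = ψ p * ψ p'
      rw [map_mul]

@[simp] lemma KK_apply_left (α : P →* G) (ψ : P →* Multiplicative (ZMod n)) (s : ZMod n → P)
    (p : P) (d : ZMod n) :
    (KK n α ψ s p).left d = α ((s d)⁻¹ * p * s (d - (ψ p).toAdd)) := rfl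

@[simp] lemma KK_apply_right (α : P →* G) (ψ : P →* Multiplicative (ZMod n)) (s : ZMod n → P)
    (p : P) : (KK n α ψ s p).right = ψ p := rfl

lemma conj_left (A B : (ZMod n → Γ) ⋊[shift n Γ] Multiplicative (ZMod n))
    (hB : B.right = 1) (d : ZMod n) :
    (A * B * A⁻¹).left d = A.left d * B.left (d - A.right.toAdd) * (A.left d)⁻¹ := by
  have h1 : (A * B * A⁻¹).left = A.left * (shift n Γ A.right) B.left * A.left⁻¹ := by
    rw [SemidirectProduct.mul_left, SemidirectProduct.mul_left, SemidirectProduct.inv_left,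
      SemidirectProduct.mul_right, hB, mul_one]
    rw [map_inv (shift n Γ) A.right, MulAut.apply_inv_self]
  rw [h1]
  simp [Pi.mul_apply, Pi.inv_apply, shift_apply]

end Wreath

section KKcont

variable (n : ℕ) [NeZero n] {P : Type v} [Group P] [TopologicalSpace P] [IsTopologicalGroup P]
  {G : Type} [Group G]

lemma continuous_bot_comp {X Y Z : Type*} [TopologicalSpace X] {g : X → Y}
    (hg : @Continuous X Y _ ⊥ g) (h : Y → Z) : @Continuous X Z _ ⊥ (fun x => h (g x)) :=
  continuous_bot_of_fibers _ fun z => isOpen_preimage_of_continuous_bot g hg (h ⁻¹' {z})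

lemma KK_continuous (α : P →* G) (ψ : P →* Multiplicative (ZMod n)) (s : ZMod n → P)
    (hαc : @Continuous P G _ ⊥ α)
    (hψc : @Continuous P (Multiplicative (ZMod n)) _ ⊥ ψ) :
    @Continuous P ((ZMod n → G) ⋊[shift n G] Multiplicative (ZMod n)) _ ⊥ (KK n α ψ s) := by
  apply continuous_bot_of_fibers
  intro w
  have hfib : (KK n α ψ s) ⁻¹' {w} =
      (⇑ψ ⁻¹' {w.right}) ∩
        ⋂ d : ZMod n,
          ((fun p => α ((s d)⁻¹ * p * s (d - w.right.toAdd))) ⁻¹' {w.left d}) := by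
    ext p
    simp only [Set.mem_preimage, Set.mem_singleton_iff, Set.mem_inter_iff, Set.mem_iInter]
    constructor
    · intro hp
      have hr : ψ p = w.right := by rw [← hp]; rfl
      refine ⟨hr, fun d => ?_⟩
      have := congrArg (fun z : (ZMod n → G) ⋊[shift n G] Multiplicative (ZMod n) => z.left d) hp
      simpa [hr] using this
    · rintro ⟨h1, h2⟩
      refine SemidirectProduct.ext ?_ ?_
      · funext d
        simpa [h1] using h2 d
      · exact h1
  rw [hfib]
  refine IsOpen.inter (isOpen_preimage_of_continuous_bot _ hψc _)
    (isOpen_iInter_of_finite fun d => isOpen_preimage_of_continuous_bot _ ?_ _)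
  have hm : Continuous fun p : P => (s d)⁻¹ * p * s (d - w.right.toAdd) :=
    (continuous_const.mul continuous_id).mul continuous_const
  apply continuous_bot_of_fibers
  intro gg
  exact (isOpen_preimage_of_continuous_bot _ hαc {gg}).preimage hm

end KKcont

section Main

variable {m : ℕ} {P : Type v} [Group P] [TopologicalSpace P] [IsTopologicalGroup P]
  [CompactSpace P] [T2Space P] [TotallyDisconnectedSpace P] (ι : Fin m → P)

set_option maxHeartbeats 2000000 in
/-- the hard direction: rank ≥ 2 gives almost ω-freeness -/
lemma aof_of_up
    (hUP : ∀ (G : Type) [Group G] [Finite G] (g : Fin m → G),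
      ∃! φ : {f : P →* G // @Continuous P G _ ⊥ f}, ∀ i, (φ : P →* G) (ι i) = g i)
    (hm : 1 < m) : IsAlmostOmegaFree P := by
  intro G Γ _ _ _ _ α f hαc hαs hfs
  classical
  haveI : NeZero m := ⟨by omega⟩
  have h01 : (0 : Fin m) ≠ 1 := by
    intro hcontr
    have h2 := congrArg Fin.val hcontr
    rw [Fin.val_zero, Fin.val_one', Nat.mod_eq_of_lt hm] at h2
    omega
  set r := Nat.card G with hrdef
  set CΓ := Nat.card Γ with hCdef
  have hr : 0 < r := Nat.card_pos
  have hC : 0 < CΓ := Nat.card_pos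
  set n := 1 + 2 * r * CΓ with hndef
  haveI : NeZero n := ⟨by omega⟩
  have hn1 : 1 < n := by
    have hcr : 0 < r * CΓ := Nat.mul_pos hr hC
    have h2 : 2 * r * CΓ = 2 * (r * CΓ) := by ring
    omega
  set y := ι 1 with hydef
  set a := α y with hadef
  have hapow : a ^ r = 1 := pow_card_eq_one'
  set s : ZMod n → P := fun d => y ^ d.val with hsdef
  have hs0 : s 0 = 1 := by rw [hsdef]; simp [ZMod.val_zero]
  -- ZMod val facts
  have hvalneg : ∀ A : ℕ, 0 < A → A < n → ((-(A : ZMod n)) : ZMod n).val = n - A := by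
    intro A hA0 hAn
    have hadd : ((n - A : ℕ) : ZMod n) + ((A : ℕ) : ZMod n) = 0 := by
      rw [← Nat.cast_add, Nat.sub_add_cancel hAn.le, ZMod.natCast_self]
    have hns : ((n - A : ℕ) : ZMod n) = -(A : ZMod n) :=
      eq_neg_of_add_eq_zero_left hadd
    rw [← hns, ZMod.val_cast_of_lt (by omega)]
  have hcastinj : ∀ A B : ℕ, A < n → B < n → ((A : ZMod n) = (B : ZMod n)) → A = B := by
    intro A B hA hB hab
    have := congrArg ZMod.val hab
    rwa [ZMod.val_cast_of_lt hA, ZMod.val_cast_of_lt hB] at this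
  -- the conjugating values
  set u : Fin m → ZMod n → G := fun k d => (a ^ d.val)⁻¹ * α (ι k) * a ^ d.val with hudef
  set L : Γ := Function.surjInv hfs (α (ι 0)) with hLdef
  set c₀ : Γ := Function.surjInv hfs (a ^ n) with hc0def
  -- enumeration of the kernel of f
  haveI : Fintype ↥(MonoidHom.ker f) := Fintype.ofFinite _
  set ix : ↥(MonoidHom.ker f) → ℕ := fun w => (Finite.equivFin ↥(MonoidHom.ker f) w).val
    with hixdef
  have hixCard : Nat.card ↥(MonoidHom.ker f) ≤ CΓ :=
    Nat.card_le_card_of_injective _ Subtype.val_injective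
  have hixlt : ∀ w, ix w < CΓ :=
    fun w => lt_of_lt_of_le (Finite.equivFin ↥(MonoidHom.ker f) w).isLt hixCard
  have hixinj : Function.Injective ix :=
    fun w w' hww => (Finite.equivFin ↥(MonoidHom.ker f)).injective (Fin.ext hww)
  set jj : ↥(MonoidHom.ker f) → ℕ := fun w => 1 + 2 * r * ix w with hjjdef
  have hjjb : ∀ w, 1 ≤ jj w ∧ jj w + r < n := by
    intro w
    have h1 : ix w + 1 ≤ CΓ := hixlt w
    have h2 : 2 * r * (ix w + 1) ≤ 2 * r * CΓ := Nat.mul_le_mul_left _ h1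
    have h3 : 2 * r * (ix w + 1) = 2 * r * ix w + 2 * r := by ring
    constructor
    · simp [hjjdef]
    · have : jj w = 1 + 2 * r * ix w := rfl
      omega
  set D1 : ↥(MonoidHom.ker f) → ZMod n := fun w => -((jj w : ℕ) : ZMod n) with hD1def
  set D2 : ↥(MonoidHom.ker f) → ZMod n := fun w => -(((jj w + r : ℕ)) : ZMod n) with hD2def
  have hD1inj : Function.Injective D1 := by
    intro w w' h
    have h2 := neg_injective h
    have h3 := hcastinj _ _ (by have := hjjb w; omega) (by have := hjjb w'; omega) h2
    have h4 : 2 * r * ix w = 2 * r * ix w' := by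
      have : jj w = 1 + 2 * r * ix w := rfl
      have : jj w' = 1 + 2 * r * ix w' := rfl
      omega
    exact hixinj (Nat.eq_of_mul_eq_mul_left (by omega) h4)
  have hD12 : ∀ w w', D1 w ≠ D2 w' := by
    intro w w' h
    have h2 := neg_injective h
    have h3 := hcastinj _ _ (by have := hjjb w; omega) (by have := hjjb w'; omega) h2
    -- 1 + 2 r (ix w) = 1 + 2 r (ix w') + r : parity contradiction
    have h4 : r * (2 * ix w) = r * (2 * ix w' + 1) := by
      have e1 : jj w = 1 + 2 * r * ix w := rfl
      have e2 : jj w' = 1 + 2 * r * ix w' := rfl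
      have e3 : 2 * r * ix w = r * (2 * ix w) := by ring
      have e4 : 2 * r * ix w' = r * (2 * ix w') := by ring
      have e5 : r * (2 * ix w' + 1) = r * (2 * ix w') + r := by ring
      omega
    have h5 := Nat.eq_of_mul_eq_mul_left hr h4
    omega
  -- powers of a at the special indices
  have hpows : ∀ w, a ^ ((D1 w).val) = 1 ∧ a ^ ((D2 w).val) = 1 := by
    intro w
    obtain ⟨e, he⟩ : ∃ e, CΓ = ix w + (e + 1) := ⟨CΓ - ix w - 1, by have := hixlt w; omega⟩
    have hb := hjjb w
    have hv1 : (D1 w).val = n - jj w := hvalneg _ (by omega) (by omega)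
    have hv2 : (D2 w).val = n - (jj w + r) := hvalneg _ (by omega) (by omega)
    have hs1 : n - jj w = r * (2 * (e + 1)) := by
      have : jj w + r * (2 * (e + 1)) = n := by
        have e1 : jj w = 1 + 2 * r * ix w := rfl
        rw [hndef, he]
        rw [e1]
        ring
      omega
    have hs2 : n - (jj w + r) = r * (2 * e + 1) := by
      have : (jj w + r) + r * (2 * e + 1) = n := by
        have e1 : jj w = 1 + 2 * r * ix w := rfl
        rw [hndef, he, e1]
        ring
      omega
    constructor
    · rw [hv1, hs1, pow_mul, hapow, one_pow]
    · rw [hv2, hs2, pow_mul, hapow, one_pow]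
  have hu1 : ∀ w, u 0 (D1 w) = α (ι 0) := by
    intro w
    show (a ^ ((D1 w).val))⁻¹ * α (ι 0) * a ^ ((D1 w).val) = α (ι 0)
    rw [(hpows w).1]
    simp
  have hu2 : ∀ w, u 0 (D2 w) = α (ι 0) := by
    intro w
    show (a ^ ((D2 w).val))⁻¹ * α (ι 0) * a ^ ((D2 w).val) = α (ι 0)
    rw [(hpows w).2]
    simp
  -- the twisting function
  set τ : ZMod n → Γ := fun d =>
    if h : ∃ w, d = D1 w then L⁻¹ * (h.choose : Γ) * L else 1 with hτdef
  have hτker : ∀ d, f (τ d) = 1 := by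
    intro d
    rw [hτdef]
    dsimp only
    split_ifs with h
    · have hw := h.choose.2
      rw [MonoidHom.mem_ker] at hw
      rw [map_mul, map_mul, map_inv, hw, mul_one, inv_mul_cancel]
    · exact map_one f
  have hτD1 : ∀ w, τ (D1 w) = L⁻¹ * (w : Γ) * L := by
    intro w
    have hex : ∃ w', D1 w = D1 w' := ⟨w, rfl⟩
    rw [hτdef]
    dsimp only
    rw [dif_pos hex]
    have : hex.choose = w := (hD1inj hex.choose_spec.symm)
    rw [this]
  have hτD2 : ∀ w, τ (D2 w) = 1 := by
    intro w
    have hnex : ¬∃ w', D2 w = D1 w' := by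
      rintro ⟨w', hw'⟩
      exact hD12 w' w hw'.symm
    rw [hτdef]
    dsimp only
    rw [dif_neg hnex]
  -- the prescribed generator images
  set wΓ : Fin m → ZMod n → Γ := fun k d =>
    if k = 1 then (if d = 0 then c₀ else 1)
    else Function.surjInv hfs (u k d) * (if k = 0 then τ d else 1) with hwΓdef
  set gval : Fin m → (ZMod n → Γ) ⋊[shift n Γ] Multiplicative (ZMod n) := fun k =>
    ⟨wΓ k, if k = 1 then Multiplicative.ofAdd (1 : ZMod n) else 1⟩ with hgvaldef
  obtain ⟨ρs, hρgen, -⟩ := hUP ((ZMod n → Γ) ⋊[shift n Γ] Multiplicative (ZMod n)) gval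
  set ρ : P →* (ZMod n → Γ) ⋊[shift n Γ] Multiplicative (ZMod n) := ρs.1 with hρdef
  have hρc := ρs.2
  set ψ : P →* Multiplicative (ZMod n) := SemidirectProduct.rightHom.comp ρ with hψdef
  have hψc : @Continuous P (Multiplicative (ZMod n)) _ ⊥ ψ := by
    show @Continuous P (Multiplicative (ZMod n)) _ ⊥ fun x => SemidirectProduct.rightHom (ρ x)
    exact continuous_bot_comp hρc _
  have hψy : ψ y = Multiplicative.ofAdd (1 : ZMod n) := by
    show SemidirectProduct.rightHom (ρ (ι 1)) = _
    rw [hρgen 1]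
    simp [hgvaldef, SemidirectProduct.rightHom]
  have hψk : ∀ k, k ≠ (1 : Fin m) → ψ (ι k) = 1 := by
    intro k hk
    show SemidirectProduct.rightHom (ρ (ι k)) = _
    rw [hρgen k]
    simp [hgvaldef, SemidirectProduct.rightHom, hk]
  have hψgen : ∀ k, ψ (ι k) = (gval k).right := fun k => by
    show SemidirectProduct.rightHom (ρ (ι k)) = _
    rw [hρgen k]
    rfl
  -- the two homs into the G-wreath product agree
  set κ := KK n α ψ s with hκdef
  have hκc := KK_continuous n α ψ s hαc hψc
  have hcompat : ∀ c : Multiplicative (ZMod n),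
      (f.compLeft (ZMod n)).comp ((shift n Γ) c).toMonoidHom
        = ((shift n G) ((MonoidHom.id (Multiplicative (ZMod n))) c)).toMonoidHom.comp
            (f.compLeft (ZMod n)) := by
    intro c
    apply MonoidHom.ext
    intro uu
    funext d
    rfl
  set fbar := SemidirectProduct.map (f.compLeft (ZMod n)) (MonoidHom.id _) hcompat
    with hfbardef
  have hfbarρc : @Continuous P _ _ ⊥ ⇑(fbar.comp ρ) := by
    show @Continuous P _ _ ⊥ fun x => fbar (ρ x)
    exact continuous_bot_comp hρc _
  have hvalsub : ∀ d : ZMod n, d ≠ 0 → (d - 1 : ZMod n).val = d.val - 1 ∧ 0 < d.val := by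
    intro d hd
    have hvpos : 0 < d.val := by
      rcases Nat.eq_zero_or_pos d.val with h | h
      · exact absurd ((ZMod.val_eq_zero d).mp h) hd
      · exact h
    constructor
    · have hcast : (d - 1 : ZMod n) = ((d.val - 1 : ℕ) : ZMod n) := by
        rw [Nat.cast_sub hvpos, Nat.cast_one, ZMod.natCast_val, ZMod.cast_id]
      rw [hcast, ZMod.val_cast_of_lt (by have := ZMod.val_lt d; omega)]
    · exact hvpos
  have hkey : fbar.comp ρ = κ := by
    apply homs_eq_of_up ι hUP hfbarρc hκc
    intro k
    rw [MonoidHom.comp_apply, hρgen k]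
    refine SemidirectProduct.ext ?_ ?_
    · funext d
      show f (wΓ k d) = (KK n α ψ s (ι k)).left d
      rw [KK_apply_left]
      by_cases hk : k = 1
      · subst hk
        have hgr : (ψ (ι 1)).toAdd = (1 : ZMod n) := by
          rw [hψgen 1, hgvaldef]
          simp
        rw [hgr]
        have hwg : wΓ 1 d = if d = 0 then c₀ else 1 := by rw [hwΓdef]; simp
        rw [hwg]
        by_cases hd : d = 0
        · subst hd
          rw [if_pos rfl, hc0def, Function.surjInv_eq hfs]
          rw [hs0]
          have hneg1 : ((0 : ZMod n) - 1) = -((1 : ℕ) : ZMod n) := by push_cast; ring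
          have hv : ((0 : ZMod n) - 1).val = n - 1 := by
            rw [hneg1, hvalneg 1 (by omega) (by omega)]
          rw [hsdef]
          dsimp only
          rw [hv]
          rw [inv_one, one_mul]
          rw [hydef, hadef, hydef]
          rw [← pow_succ' (ι 1) (n - 1), Nat.sub_add_cancel (by omega), map_pow]
        · rw [if_neg hd]
          obtain ⟨hval, hvpos⟩ := hvalsub d hd
          rw [map_one]
          have harg : (s d)⁻¹ * ι 1 * s (d - 1) = 1 := by
            rw [hsdef]
            dsimp only
            rw [hval, mul_assoc, ← pow_succ' (ι 1) (d.val - 1),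
              Nat.sub_add_cancel hvpos]
            rw [hydef]
            exact inv_mul_cancel _
          rw [harg, map_one]
      · have hgr : (ψ (ι k)).toAdd = (0 : ZMod n) := by
          rw [hψk k hk]
          rfl
        rw [hgr, sub_zero]
        have hrhs : α ((s d)⁻¹ * ι k * s d) = u k d := by
          rw [hsdef, hudef]
          dsimp only
          rw [map_mul, map_mul, map_inv, map_pow, hadef, hydef]
        rw [hrhs]
        have hwg : wΓ k d = Function.surjInv hfs (u k d) * (if k = 0 then τ d else 1) := by
          rw [hwΓdef]
          simp [hk]
        rw [hwg, map_mul, Function.surjInv_eq hfs]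
        by_cases hk0 : k = 0
        · rw [if_pos hk0, hτker d, mul_one]
        · rw [if_neg hk0, map_one, mul_one]
    · show ((fbar) (gval k)).right = ψ (ι k)
      rw [SemidirectProduct.map_right, hψgen k]
      rfl
  -- the open subgroup H = ker ψ and the solution γ
  set H : Subgroup P := MonoidHom.ker ψ with hHdef
  have hHopen : IsOpen (H : Set P) := by
    have hset : (H : Set P) = ⇑ψ ⁻¹' {1} := by
      ext p
      simp [hHdef, MonoidHom.mem_ker]
    rw [hset]
    exact isOpen_preimage_of_continuous_bot _ hψc _
  have hright1 : ∀ h : ↥H, (ρ (h : P)).right = 1 := fun h => h.2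
  set γ : ↥H →* Γ :=
    { toFun := fun h => (ρ (h : P)).left 0
      map_one' := by
        show (ρ ((1 : ↥H) : P)).left 0 = 1
        rw [show ((1 : ↥H) : P) = 1 from rfl, map_one]
        rfl
      map_mul' := fun h h' => by
        show (ρ ((h * h' : ↥H) : P)).left 0 = _
        rw [show ((h * h' : ↥H) : P) = (h : P) * (h' : P) from rfl, map_mul,
          SemidirectProduct.mul_left, Pi.mul_apply, hright1 h, shift_apply]
        norm_num } with hγdef
  have hγc : @Continuous ↥H Γ _ ⊥ ⇑γ := by
    show @Continuous ↥H Γ _ ⊥ fun h : ↥H => (ρ (h : P)).left 0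
    have hρval : @Continuous ↥H _ _ ⊥ fun h : ↥H => ρ (h : P) := by
      apply continuous_bot_of_fibers
      intro w
      exact (isOpen_preimage_of_continuous_bot _ hρc {w}).preimage continuous_subtype_val
    exact continuous_bot_comp hρval
      (fun w : (ZMod n → Γ) ⋊[shift n Γ] Multiplicative (ZMod n) => w.left 0)
  have hcomm : f.comp γ = α.comp H.subtype := by
    apply MonoidHom.ext
    intro h
    show f ((ρ (h : P)).left 0) = α (h : P)
    have h1 : f ((ρ (h : P)).left 0) = (fbar (ρ (h : P))).left 0 := rfl
    rw [h1]
    have h2 : fbar (ρ (h : P)) = κ (h : P) := by rw [← MonoidHom.comp_apply, hkey]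
    rw [h2, hκdef, KK_apply_left]
    have h3 : (ψ (h : P)).toAdd = 0 := by
      have h2 : ψ (h : P) = 1 := h.2
      rw [h2]
      rfl
    rw [h3, sub_zero, hs0]
    simp
  -- α is surjective on H
  have hαH : ∀ gg : G, ∃ p : P, ψ p = 1 ∧ α p = gg := by
    intro gg
    obtain ⟨p, hp⟩ := hαs gg
    have hcop : Nat.Coprime r n := by
      have hne : n = 1 + r * (2 * CΓ) := by rw [hndef]; ring
      rw [hne]
      exact (Nat.coprime_add_mul_left_right r 1 (2 * CΓ)).mpr (Nat.coprime_one_right r)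
    have hunit : IsUnit ((r : ℕ) : ZMod n) := (ZMod.isUnit_iff_coprime r n).mpr hcop
    obtain ⟨vr, hvr⟩ := hunit
    set c : ZMod n := (ψ p).toAdd with hcdef
    set t : ℕ := ((((vr⁻¹ : (ZMod n)ˣ) : ZMod n)) * (-c)).val with htdef
    have htcast : ((t : ℕ) : ZMod n) = ((vr⁻¹ : (ZMod n)ˣ) : ZMod n) * (-c) := by
      rw [htdef, ZMod.natCast_val, ZMod.cast_id]
    have hrt : ((r * t : ℕ) : ZMod n) = -c := by
      rw [Nat.cast_mul, htcast, ← hvr, ← mul_assoc, Units.mul_inv, one_mul]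
    refine ⟨p * y ^ (r * t), ?_, ?_⟩
    · rw [map_mul, map_pow, hψy]
      have hofAdd : (Multiplicative.ofAdd (1 : ZMod n)) ^ (r * t)
          = Multiplicative.ofAdd (((r * t : ℕ) : ZMod n)) := by
        apply Multiplicative.toAdd.injective
        rw [toAdd_pow]
        simp [nsmul_eq_mul]
      rw [hofAdd, hrt]
      have : ψ p = Multiplicative.ofAdd c := by rw [hcdef]; rfl
      rw [this, ← ofAdd_add]
      simp
    · rw [map_mul, map_pow]
      have : α y = a := rfl
      rw [this, pow_mul, hapow, one_pow, mul_one, hp]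
  -- right components of powers of gval 1
  have hB0 : (gval 0).right = 1 := by
    rw [hgvaldef]
    simp [h01]
  have hVright : ∀ jnat : ℕ,
      ((gval 1) ^ jnat).right = Multiplicative.ofAdd ((jnat : ℕ) : ZMod n) := by
    intro jnat
    have h1 : ((gval 1) ^ jnat).right = ((gval 1).right) ^ jnat := by
      show SemidirectProduct.rightHom ((gval 1) ^ jnat) = _
      rw [map_pow]
      rfl
    rw [h1, hgvaldef]
    simp only [if_pos rfl]
    apply Multiplicative.toAdd.injective
    rw [toAdd_pow]
    simp [nsmul_eq_mul]
  have hVleft : ∀ jnat : ℕ, 1 ≤ jnat → jnat < n → ((gval 1) ^ jnat).left 0 = c₀ := by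
    intro jnat
    induction jnat with
    | zero => omega
    | succ jp ih =>
      intro h1 h2
      by_cases hjp : jp = 0
      · subst hjp
        rw [pow_one, hgvaldef]
        simp [hwΓdef]
      · have ih' := ih (by omega) (by omega)
        rw [pow_succ, SemidirectProduct.mul_left, Pi.mul_apply, ih', hVright jp]
        rw [shift_apply]
        have hne0 : ((jp : ℕ) : ZMod n) ≠ 0 := by
          intro hz
          have := hcastinj jp 0 (by omega) (by omega) (by rw [hz]; simp)
          omega
        have hcond : (0 : ZMod n) - (Multiplicative.ofAdd ((jp : ℕ) : ZMod n)).toAdd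
            = -((jp : ℕ) : ZMod n) := by
          rw [toAdd_ofAdd, zero_sub]
        rw [hcond]
        have hwg : (gval 1).left (-((jp : ℕ) : ZMod n)) = 1 := by
          show wΓ 1 (-((jp : ℕ) : ZMod n)) = 1
          rw [hwΓdef]
          dsimp only
          rw [if_pos rfl, if_neg (neg_ne_zero.mpr hne0)]
        rw [hwg, mul_one]
  -- membership of the conjugates
  have hmemA : ∀ jnat : ℕ, y ^ jnat * ι 0 * (y ^ jnat)⁻¹ ∈ H := by
    intro jnat
    have : ψ (y ^ jnat * ι 0 * (y ^ jnat)⁻¹) = 1 := by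
      rw [map_mul, map_mul, map_inv, map_pow, hψk 0 h01, mul_one, mul_inv_cancel]
    rw [hHdef, MonoidHom.mem_ker]
    exact this
  -- γ on the conjugates
  have hγA : ∀ jnat : ℕ, 1 ≤ jnat → jnat < n →
      γ ⟨y ^ jnat * ι 0 * (y ^ jnat)⁻¹, hmemA jnat⟩
        = c₀ * wΓ 0 (-((jnat : ℕ) : ZMod n)) * c₀⁻¹ := by
    intro jnat h1 h2
    show (ρ (y ^ jnat * ι 0 * (y ^ jnat)⁻¹)).left 0 = _
    rw [map_mul, map_mul, map_inv, map_pow, hydef, hρgen 1, hρgen 0]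
    rw [conj_left n Γ _ _ hB0 0]
    rw [hVleft jnat h1 h2, hVright jnat]
    have hcond : (0 : ZMod n) - (Multiplicative.ofAdd ((jnat : ℕ) : ZMod n)).toAdd
        = -((jnat : ℕ) : ZMod n) := by
      rw [toAdd_ofAdd, zero_sub]
    rw [hcond]
  -- the kernel of f is in the range of γ
  have hker_sub : ∀ kk : Γ, kk ∈ MonoidHom.ker f → kk ∈ MonoidHom.range γ := by
    intro kk hkk
    have hmemker : c₀⁻¹ * kk * c₀ ∈ MonoidHom.ker f := by
      rw [MonoidHom.mem_ker] at hkk ⊢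
      rw [map_mul, map_mul, map_inv, hkk, mul_one, inv_mul_cancel]
    set w : ↥(MonoidHom.ker f) := ⟨c₀⁻¹ * kk * c₀, hmemker⟩ with hwdef
    have hb := hjjb w
    have hD1w : -((jj w : ℕ) : ZMod n) = D1 w := rfl
    have hD2w : -(((jj w + r : ℕ)) : ZMod n) = D2 w := rfl
    have hwA : wΓ 0 (D1 w) = (w : Γ) * L := by
      rw [hwΓdef]
      dsimp only
      rw [if_neg h01, if_pos rfl, hτD1 w]
      rw [hu1 w, ← hLdef]
      group
    have hwB : wΓ 0 (D2 w) = L := by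
      rw [hwΓdef]
      dsimp only
      rw [if_neg h01, if_pos rfl, hτD2 w]
      rw [hu2 w, ← hLdef, mul_one]
    have hA := hγA (jj w) hb.1 (by omega)
    have hB := hγA (jj w + r) (by omega) (by omega)
    rw [hD1w, hwA] at hA
    rw [hD2w, hwB] at hB
    refine ⟨⟨y ^ (jj w) * ι 0 * (y ^ (jj w))⁻¹, hmemA _⟩
      * (⟨y ^ (jj w + r) * ι 0 * (y ^ (jj w + r))⁻¹, hmemA _⟩)⁻¹, ?_⟩
    rw [map_mul, map_inv, hA, hB]
    have hwc : (w : Γ) = c₀⁻¹ * kk * c₀ := rfl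
    rw [hwc]
    group
  -- γ is surjective
  have hγs : Function.Surjective ⇑γ := by
    intro gg
    obtain ⟨p, hψp, hαp⟩ := hαH (f gg)
    have hpH : p ∈ H := by rw [hHdef, MonoidHom.mem_ker]; exact hψp
    have hfγ : f (γ ⟨p, hpH⟩) = f gg := by
      have := congrArg (fun φ : ↥H →* G => φ ⟨p, hpH⟩) hcomm
      simp only [MonoidHom.comp_apply] at this
      rw [this]
      show α p = f gg
      rw [hαp]
    have hker : gg * (γ ⟨p, hpH⟩)⁻¹ ∈ MonoidHom.ker f := by
      rw [MonoidHom.mem_ker, map_mul, map_inv, hfγ, mul_inv_cancel]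
    obtain ⟨x, hx⟩ := hker_sub _ hker
    refine ⟨x * ⟨p, hpH⟩, ?_⟩
    rw [map_mul, hx]
    group
  have hHsurj : Function.Surjective ⇑(α.comp H.subtype) := by
    rw [← hcomm]
    exact hfs.comp hγs
  exact ⟨H, hHopen, hHsurj, γ, hγc, hγs, hcomm⟩


end Main

end HS

/-- **Corollary 4.3 (Harbater–Stevenson).**  A free profinite group of finite rank `m`
is almost ω-free if and only if `m > 1`. -/
theorem stmt12 (m : ℕ) (P : Type v) [Group P] [TopologicalSpace P]
    (h : IsFreeProfiniteOfRank m P) :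
    IsAlmostOmegaFree P ↔ 1 < m := by
  obtain ⟨htg, hcs, ht2, htd, ι, hUP⟩ := h
  haveI := htg
  haveI := hcs
  haveI := ht2
  haveI := htd
  constructor
  · intro hAOF
    by_contra hle
    push_neg at hle
    have hcase : m = 0 ∨ m = 1 := by omega
    rcases hcase with hm0 | hm1
    · exact HS.not_aof_of_rank_zero ι hUP hm0 hAOF
    · exact HS.not_aof_of_rank_one ι hUP hm1 hAOF
  · intro hm
    exact HS.aof_of_up ι hUP hm
end
end

section
/- Every free profinite group of finite rank m ≥ 2 is almost ω-free: for every finite embedding problem E = (α: Π → G, f: Γ → G) for a free profinite group Π of finite rank m ≥ 2, there exists an open subgroup H ⊆ Π such that α|_H: H → G is surjective and the induced embedding problem (α|_H, f) has a proper solution. -/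
open AlgebraicGeometry CategoryTheory CategoryTheory.Limits

universe u v

noncomputable section


namespace Stmt14Aux

open Multiplicative

/-- Shift action of `ZMod n` on `ZMod n → Q`. -/
def shiftAut (n : ℕ) (Q : Type) [Group Q] :
    Multiplicative (ZMod n) →* MulAut (ZMod n → Q) where
  toFun a :=
    { toFun := fun v t => v (t - a.toAdd)
      invFun := fun v t => v (t + a.toAdd)
      left_inv := fun v => funext fun t => by simp
      right_inv := fun v => funext fun t => by simp
      map_mul' := fun v w => rfl }
  map_one' := by
    ext v t
    simp
  map_mul' a b := by
    ext v t
    simp [MulAut.mul_apply, sub_sub]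

lemma shiftAut_apply (n : ℕ) (Q : Type) [Group Q] (a : Multiplicative (ZMod n))
    (v : ZMod n → Q) (t : ZMod n) : shiftAut n Q a v t = v (t - a.toAdd) := rfl

/-- A finite wreath-type product. -/
abbrev Wr (n : ℕ) (Q : Type) [Group Q] : Type :=
  (ZMod n → Q) ⋊[shiftAut n Q] Multiplicative (ZMod n)

instance (n : ℕ) (Q : Type) [Group Q] [Finite Q] [NeZero n] : Finite (Wr n Q) :=
  Finite.of_surjective
    (fun p : (ZMod n → Q) × Multiplicative (ZMod n) => (⟨p.1, p.2⟩ : Wr n Q))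
    (fun x => ⟨(x.left, x.right), rfl⟩)

/-- Map induced on wreath products by postcomposition on the base. -/
def wrMap (n : ℕ) {Q R : Type} [Group Q] [Group R] (f : Q →* R) :
    Wr n Q →* Wr n R where
  toFun x := ⟨fun t => f (x.left t), x.right⟩
  map_one' := by
    ext t <;> simp
  map_mul' x y := by
    ext t <;> simp [shiftAut_apply]

/-- The homomorphism `G × ZMod n →* Wr n G` sending `(g, a)` to the constant
vector `g` together with shift `a`. -/
def constWr (n : ℕ) (G : Type) [Group G] : G × Multiplicative (ZMod n) →* Wr n G where
  toFun p := ⟨fun _ => p.1, p.2⟩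
  map_one' := rfl
  map_mul' _ _ := rfl

lemma card_dvd_of_surj {A B : Type*} [Group A] [Group B] (q : A →* B)
    (hq : Function.Surjective q) : Nat.card B ∣ Nat.card A := by
  have h1 := Subgroup.card_eq_card_quotient_mul_card_subgroup q.ker
  rw [Nat.card_congr (QuotientGroup.quotientKerEquivOfSurjective q hq).toEquiv] at h1
  exact ⟨Nat.card q.ker, h1⟩

end Stmt14Aux

open Stmt14Aux Multiplicative in
/-- **The higher-rank case of Corollary 4.3 (Harbater–Stevenson).**  Every free
profinite group of finite rank `m ≥ 2` is almost ω-free: every finite embedding problem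
for it acquires a proper solution after restriction to a suitable open subgroup on
which the given surjection remains surjective. -/
theorem stmt14 (m : ℕ) (hm : 2 ≤ m) (P : Type v) [Group P] [TopologicalSpace P]
    (h : IsFreeProfiniteOfRank m P) :
    IsAlmostOmegaFree P := by
  classical
  obtain ⟨-, -, -, -, ι, hUP⟩ := h
  intro G Γ _ _ _ _ α f hαc hαs hfs
  have hm0 : 0 < m := by omega
  have hm1 : 1 < m := by omega
  set i₁ : Fin m := ⟨0, hm0⟩ with hi₁def
  set i₂ : Fin m := ⟨1, hm1⟩ with hi₂def
  have h12 : i₁ ≠ i₂ := by simp [hi₁def, hi₂def, Fin.ext_iff]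
  -- lifts of the images of the generators
  choose γt hγt using fun i => hfs (α (ι i))
  set k : ℕ := Nat.card Γ with hkdef
  have hk : 0 < k := Nat.card_pos
  set n : ℕ := k * k + 1 with hndef
  haveI : NeZero n := ⟨by omega⟩
  set e := Finite.equivFin ↥f.ker with hedef
  set r : ℕ := orderOf (γt i₁) with hrdef
  have hrpos : 0 < r := orderOf_pos _
  have hrk : r ≤ k := Nat.le_of_dvd hk (orderOf_dvd_natCard _)
  have hNk : Nat.card ↥f.ker ≤ k := Nat.le_of_dvd hk (Subgroup.card_subgroup_dvd_card _)
  -- distinguished points of `ZMod n`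
  have hbound : ∀ κ : ↥f.ker, r * (e κ : ℕ) < n := by
    intro κ
    have h1 : (e κ : ℕ) < Nat.card ↥f.ker := (e κ).2
    have h3 : r * Nat.card ↥f.ker ≤ k * k := Nat.mul_le_mul hrk hNk
    nlinarith [h1, hrpos]
  set pt : ↥f.ker → ZMod n := fun κ => -((r * (e κ : ℕ) : ℕ) : ZMod n) with hptdef
  have hptinj : Function.Injective pt := by
    intro a b hab
    have h1 : ((r * (e a : ℕ) : ℕ) : ZMod n) = ((r * (e b : ℕ) : ℕ) : ZMod n) :=
      neg_injective hab
    have h2 := congrArg ZMod.val h1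
    rw [ZMod.val_cast_of_lt (hbound a), ZMod.val_cast_of_lt (hbound b)] at h2
    exact e.injective (Fin.ext (Nat.eq_of_mul_eq_mul_left hrpos h2))
  set cfun : ZMod n → Γ :=
    fun t => if h : ∃ κ : ↥f.ker, pt κ = t then ((h.choose : ↥f.ker) : Γ) else 1 with hcdef
  have hcK : ∀ t, cfun t ∈ f.ker := by
    intro t
    by_cases h : ∃ κ : ↥f.ker, pt κ = t
    · simp only [hcdef, dif_pos h]; exact (h.choose).2
    · simp only [hcdef, dif_neg h]; exact one_mem _
  have hcpt : ∀ κ : ↥f.ker, cfun (pt κ) = κ := by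
    intro κ
    have hex : ∃ κ' : ↥f.ker, pt κ' = pt κ := ⟨κ, rfl⟩
    simp only [hcdef, dif_pos hex]
    exact congrArg _ (hptinj hex.choose_spec)
  set w2 : ZMod n → Γ := fun t => γt i₂ * cfun t with hw2def
  have hfw2 : ∀ t, f (w2 t) = α (ι i₂) := by
    intro t
    have := hcK t
    rw [MonoidHom.mem_ker] at this
    rw [hw2def]
    simp only [map_mul, this, mul_one, hγt]
  -- the target tuple in the wreath product
  set s : Fin m → Wr n Γ := fun i =>
    ⟨if i = i₂ then w2 else fun _ => γt i,
      if i = i₁ then ofAdd (1 : ZMod n) else 1⟩ with hsdef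
  obtain ⟨Φ, hΦ, -⟩ := hUP (Wr n Γ) s
  set Ψ : P →* Wr n Γ := Φ.1 with hΨdef
  have hΨc : @Continuous P (Wr n Γ) _ ⊥ Ψ := Φ.2
  have hΨι : ∀ i, Ψ (ι i) = s i := hΦ
  set ε : P →* Multiplicative (ZMod n) := SemidirectProduct.rightHom.comp Ψ with hεdef
  have hεc : @Continuous P (Multiplicative (ZMod n)) _ ⊥ ε := by
    letI : TopologicalSpace (Wr n Γ) := ⊥
    letI : TopologicalSpace (Multiplicative (ZMod n)) := ⊥
    haveI : DiscreteTopology (Wr n Γ) := discreteTopology_bot _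
    exact (continuous_of_discreteTopology
      (f := fun w : Wr n Γ => SemidirectProduct.rightHom w)).comp hΨc
  have hει : ∀ i, ε (ι i) = if i = i₁ then ofAdd (1 : ZMod n) else 1 := by
    intro i
    show SemidirectProduct.rightHom (Ψ (ι i)) = _
    rw [hΨι i]
    rfl
  -- the open subgroup
  have hHopen : IsOpen ((ε.ker : Subgroup P) : Set P) := by
    have hset : ((ε.ker : Subgroup P) : Set P) = ε ⁻¹' {1} := by
      ext x
      simp [MonoidHom.mem_ker]
    rw [hset]
    exact hεc.isOpen_preimage _ (@isOpen_discrete _ ⊥ (discreteTopology_bot _) _)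
  -- surjectivity of α on the subgroup, via a counting argument
  set ρ : P →* G × Multiplicative (ZMod n) := α.prod ε with hρdef
  set X : Subgroup (G × Multiplicative (ZMod n)) := ρ.range with hXdef
  have hprojG : Function.Surjective ((MonoidHom.fst G (Multiplicative (ZMod n))).comp X.subtype) := by
    intro g
    obtain ⟨x, hx⟩ := hαs g
    exact ⟨⟨ρ x, ⟨x, rfl⟩⟩, hx⟩
  have hprojZ : Function.Surjective ((MonoidHom.snd G (Multiplicative (ZMod n))).comp X.subtype) := by
    intro z
    refine ⟨⟨ρ ((ι i₁) ^ (z.toAdd.val)), ⟨_, rfl⟩⟩, ?_⟩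
    show ε ((ι i₁) ^ (z.toAdd.val)) = z
    rw [map_pow, hει i₁, if_pos rfl, ← ofAdd_nsmul]
    rw [nsmul_eq_mul, mul_one, ZMod.natCast_rightInverse z.toAdd]
    simp
  have hcardZ : Nat.card (Multiplicative (ZMod n)) = n := by
    rw [Nat.card_congr (Multiplicative.toAdd (α := ZMod n)), Nat.card_zmod]
  have hdvd1 : Nat.card G ∣ Nat.card X := card_dvd_of_surj _ hprojG
  have hdvd2 : n ∣ Nat.card X := by
    have := card_dvd_of_surj _ hprojZ
    rwa [hcardZ] at this
  have hGk : Nat.card G ∣ k := by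
    have h1 := Subgroup.card_eq_card_quotient_mul_card_subgroup f.ker
    rw [Nat.card_congr (QuotientGroup.quotientKerEquivOfSurjective f hfs).toEquiv] at h1
    exact ⟨_, h1⟩
  have hcop : Nat.Coprime (Nat.card G) n := by
    obtain ⟨c, hc⟩ : Nat.card G ∣ k * k := hGk.mul_right k
    have hn2 : n = 1 + c * Nat.card G := by
      rw [hndef, hc]; ring
    unfold Nat.Coprime
    rw [hn2, Nat.gcd_add_mul_right_right (Nat.card G) 1 c, Nat.gcd_one_right]
  have hXcard : Nat.card X = Nat.card (G × Multiplicative (ZMod n)) := by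
    apply Nat.dvd_antisymm (Subgroup.card_subgroup_dvd_card X)
    rw [Nat.card_prod, hcardZ]
    exact hcop.mul_dvd_of_dvd_of_dvd hdvd1 hdvd2
  have hX : X = ⊤ := Subgroup.eq_top_of_card_eq _ hXcard
  have hαH : Function.Surjective (α.comp (ε.ker).subtype) := by
    intro g
    have hmem : (g, (1 : Multiplicative (ZMod n))) ∈ X := by rw [hX]; trivial
    obtain ⟨x, hx⟩ := hmem
    have h1 : α x = g := congrArg Prod.fst hx
    have h2 : ε x = 1 := congrArg Prod.snd hx
    exact ⟨⟨x, h2⟩, h1⟩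
  -- the solution homomorphism
  set γ : ↥ε.ker →* Γ :=
    { toFun := fun x => (Ψ (x : P)).left 0
      map_one' := by
        show (Ψ ((1 : ↥ε.ker) : P)).left 0 = 1
        rw [OneMemClass.coe_one, map_one]
        rfl
      map_mul' := fun x y => by
        have hx : (Ψ (x : P)).right = 1 := x.2
        show (Ψ ((x : P) * (y : P))).left 0 = _
        rw [map_mul, SemidirectProduct.mul_left, hx, map_one]
        rfl } with hγdef
  have hγc : @Continuous ↥ε.ker Γ _ ⊥ γ := by
    letI : TopologicalSpace (Wr n Γ) := ⊥
    letI : TopologicalSpace Γ := ⊥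
    haveI : DiscreteTopology (Wr n Γ) := discreteTopology_bot _
    have h1 : Continuous (fun x : ↥ε.ker => Ψ (x : P)) := hΨc.comp continuous_subtype_val
    exact (continuous_of_discreteTopology (f := fun w : Wr n Γ => w.left 0)).comp h1
  -- the key identity `f ∘ γ = α` via uniqueness
  set Φ₁ : P →* Wr n G := (wrMap n f).comp Ψ with hΦ₁def
  set Φ₂ : P →* Wr n G := (constWr n G).comp ρ with hΦ₂def
  have c₁ : @Continuous P (Wr n G) _ ⊥ Φ₁ := by
    letI : TopologicalSpace (Wr n Γ) := ⊥
    letI : TopologicalSpace (Wr n G) := ⊥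
    haveI : DiscreteTopology (Wr n Γ) := discreteTopology_bot _
    exact (continuous_of_discreteTopology (f := (wrMap n f))).comp hΨc
  have c₂ : @Continuous P (Wr n G) _ ⊥ Φ₂ := by
    letI tG : TopologicalSpace G := ⊥
    letI tZ : TopologicalSpace (Multiplicative (ZMod n)) := ⊥
    letI tW : TopologicalSpace (Wr n G) := ⊥
    haveI : DiscreteTopology G := discreteTopology_bot _
    haveI : DiscreteTopology (Multiplicative (ZMod n)) := discreteTopology_bot _
    have hρc : Continuous (fun x : P => ((α x, ε x) : G × Multiplicative (ZMod n))) :=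
      Continuous.prodMk hαc hεc
    exact (continuous_of_discreteTopology (f := (constWr n G))).comp hρc
  have p₁ : ∀ i, Φ₁ (ι i) = ⟨fun _ => α (ι i), if i = i₁ then ofAdd (1 : ZMod n) else 1⟩ := by
    intro i
    show wrMap n f (Ψ (ι i)) = _
    rw [hΨι i]
    refine SemidirectProduct.ext ?_ rfl
    show (fun t => f ((s i).left t)) = fun _ => α (ι i)
    funext t
    by_cases hi : i = i₂
    · subst hi
      simp only [hsdef, if_pos rfl]
      exact hfw2 t
    · simp only [hsdef, if_neg hi]
      exact hγt i
  have p₂ : ∀ i, Φ₂ (ι i) = ⟨fun _ => α (ι i), if i = i₁ then ofAdd (1 : ZMod n) else 1⟩ := by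
    intro i
    show constWr n G (α (ι i), ε (ι i)) = _
    rw [hει i]
    rfl
  obtain ⟨Φ₀, -, hUniq⟩ := hUP (Wr n G)
    (fun i => ⟨fun _ => α (ι i), if i = i₁ then ofAdd (1 : ZMod n) else 1⟩)
  have e₁ : (⟨Φ₁, c₁⟩ : {f : P →* Wr n G // @Continuous P (Wr n G) _ ⊥ f}) = Φ₀ := hUniq _ p₁
  have e₂ : (⟨Φ₂, c₂⟩ : {f : P →* Wr n G // @Continuous P (Wr n G) _ ⊥ f}) = Φ₀ := hUniq _ p₂
  have hΦeq : Φ₁ = Φ₂ := congrArg Subtype.val (e₁.trans e₂.symm)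
  have keyf : ∀ x : P, f ((Ψ x).left 0) = α x := by
    intro x
    have h1 : Φ₁ x = Φ₂ x := by rw [hΦeq]
    have h2 := congrFun (congrArg SemidirectProduct.left h1) 0
    exact h2
  have hcomp : f.comp γ = α.comp (ε.ker).subtype := MonoidHom.ext fun x => keyf (x : P)
  -- surjectivity of γ
  have hS1 : Ψ (ι i₁) = ⟨fun _ => γt i₁, ofAdd (1 : ZMod n)⟩ := by
    rw [hΨι i₁]
    simp [hsdef, h12, if_neg (fun hh : i₁ = i₂ => h12 hh)]
  have hS2 : Ψ (ι i₂) = ⟨w2, 1⟩ := by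
    rw [hΨι i₂]
    simp [hsdef, if_neg (fun hh : i₂ = i₁ => h12 hh.symm)]
  have hS1pow : ∀ a : ℕ,
      (Ψ (ι i₁)) ^ a = (⟨fun _ => (γt i₁) ^ a, ofAdd ((a : ZMod n))⟩ : Wr n Γ) := by
    intro a
    induction a with
    | zero =>
      refine SemidirectProduct.ext ?_ ?_
      · funext t
        simp
      · simp
    | succ a ih =>
      rw [pow_succ, ih, hS1]
      refine SemidirectProduct.ext ?_ ?_
      · funext t
        show (γt i₁) ^ a * _ = (γt i₁) ^ (a + 1)
        rw [shiftAut_apply]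
        rw [pow_succ]
      · show ofAdd ((a : ZMod n)) * ofAdd (1 : ZMod n) = ofAdd (((a + 1 : ℕ) : ZMod n))
        rw [← ofAdd_add]
        push_cast
        rfl
  have claim : ∀ κ : ↥f.ker, ∃ x : ↥ε.ker, γ x = γt i₂ * (κ : Γ) := by
    intro κ
    set a : ℕ := r * (e κ : ℕ) with hadef
    set y : P := (ι i₁) ^ a * ι i₂ * ((ι i₁) ^ a)⁻¹ with hydef
    have hy : y ∈ ε.ker := by
      rw [MonoidHom.mem_ker, hydef, map_mul, map_mul, map_inv, map_pow,
        hει i₂, if_neg (fun hh : i₂ = i₁ => h12 hh.symm)]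
      group
    refine ⟨⟨y, hy⟩, ?_⟩
    show (Ψ y).left 0 = γt i₂ * (κ : Γ)
    have hΨy : Ψ y = (Ψ (ι i₁)) ^ a * Ψ (ι i₂) * ((Ψ (ι i₁)) ^ a)⁻¹ := by
      rw [hydef, map_mul, map_mul, map_inv, map_pow]
    have hc1 : (γt i₁) ^ a = 1 := by
      rw [hadef, pow_mul, hrdef, pow_orderOf_eq_one, one_pow]
    rw [hΨy, hS1pow, hS2]
    simp only [SemidirectProduct.mul_left, SemidirectProduct.mul_right,
      SemidirectProduct.inv_left, SemidirectProduct.inv_right,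
      shiftAut_apply, Pi.mul_apply, Pi.inv_apply, hc1]
    simp only [one_mul, mul_one, inv_one, inv_one]
    have h0 : ((0 : ZMod n) - (ofAdd ((a : ZMod n))).toAdd) = pt κ := by
      rw [hptdef]
      simp [hadef]
    rw [h0, hw2def]
    simp only []
    rw [hcpt κ]
  have hγrange : ∀ κ : ↥f.ker, (κ : Γ) ∈ γ.range := by
    intro κ
    obtain ⟨x1, hx1⟩ := claim 1
    obtain ⟨x2, hx2⟩ := claim κ
    have hval : (κ : Γ) = (γ x1)⁻¹ * γ x2 := by
      rw [hx1, hx2]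
      simp
    rw [hval]
    exact mul_mem (inv_mem ⟨x1, rfl⟩) ⟨x2, rfl⟩
  have hγs : Function.Surjective γ := by
    intro γ0
    obtain ⟨x, hx⟩ := hαH (f γ0)
    have h1 : f (γ x) = f γ0 := by
      have := keyf (x : P)
      calc f (γ x) = α (x : P) := this
        _ = f γ0 := hx
    have h2 : ((γ x)⁻¹ * γ0) ∈ f.ker := by
      rw [MonoidHom.mem_ker, map_mul, map_inv, h1]
      simp
    obtain ⟨z, hz⟩ := hγrange ⟨_, h2⟩
    exact ⟨x * z, by rw [map_mul, hz]; simp⟩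
  exact ⟨ε.ker, hHopen, hαH, γ, hγc, hγs, hcomp⟩
end
end
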